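/- (Theorem 7.) Let q be real with 0 < q < 1, α ≥ 1 an integer, d an odd positive integer, χ a Dirichlet character modulo d, x > 0 real, and s ∈ ℂ. Then L_q^χ(s, x | α) = ( [2:q] / ( [2:q^d] · [d:q^α]^s ) ) · Σ_{l=0}^{d−1} (−1)^l χ(l) q^l · ζ̃_{E,q^d}( s, (x+l)/d | α ). -/

import Mathlib

open scoped BigOperators

/-- `[x:q] = (q^x - 1)/(q - 1)` with real exponentiation. -/
noncomputable def qNum (q x : ℝ) : ℝ := (q ^ x - 1) / (q - 1)

/-- Weighted `q`-Euler Hurwitz zeta function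
`ζ̃_{E,q}(s,y|α) = [2:q] ∑_{m≥0} (-1)^m q^m [m+y:q^α]^{-s}`. -/
noncomputable def qHurwitzZeta (q : ℝ) (α : ℕ) (s : ℂ) (y : ℝ) : ℂ :=
  (qNum q 2 : ℂ) *
    ∑' m : ℕ, (-1 : ℂ) ^ m * (q : ℂ) ^ m *
      ((qNum (q ^ α) ((m : ℝ) + y) : ℝ) : ℂ) ^ (-s)

/-- Dirichlet `q`-`L`-function
`L_q^χ(s,x|α) = [2:q] ∑_{m≥0} q^m χ(m) (-1)^m [x+m:q^α]^{-s}`. -/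
noncomputable def qLfun (q : ℝ) (d : ℕ) (χ : DirichletCharacter ℂ d) (α : ℕ)
    (s : ℂ) (x : ℝ) : ℂ :=
  (qNum q 2 : ℂ) *
    ∑' m : ℕ, (q : ℂ) ^ m * χ (m : ZMod d) * (-1 : ℂ) ^ m *
      ((qNum (q ^ α) (x + (m : ℝ)) : ℝ) : ℂ) ^ (-s)

lemma qNum_eq (Q y : ℝ) : qNum Q y = (1 - Q ^ y) / (1 - Q) := by
  unfold qNum
  rw [← neg_div_neg_eq]
  ring_nf

lemma qNum_pos {Q : ℝ} (hQ0 : 0 < Q) (hQ1 : Q < 1) {y : ℝ} (hy : 0 < y) :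
    0 < qNum Q y := by
  have h1 : Q ^ y < 1 := Real.rpow_lt_one hQ0.le hQ1 hy
  rw [qNum_eq]
  exact div_pos (by linarith) (by linarith)

lemma qNum_mono {Q : ℝ} (hQ0 : 0 < Q) (hQ1 : Q < 1) {a b : ℝ} (hab : a ≤ b) :
    qNum Q a ≤ qNum Q b := by
  have h : Q ^ b ≤ Q ^ a := Real.rpow_le_rpow_of_exponent_ge hQ0 hQ1.le hab
  rw [qNum_eq, qNum_eq]
  have h2 : (0:ℝ) < 1 - Q := by linarith
  gcongr

lemma qNum_le {Q : ℝ} (hQ0 : 0 < Q) (hQ1 : Q < 1) (y : ℝ) :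
    qNum Q y ≤ 1 / (1 - Q) := by
  rw [qNum_eq]
  have h2 : (0:ℝ) < 1 - Q := by linarith
  have h3 : 0 ≤ Q ^ y := Real.rpow_nonneg hQ0.le y
  gcongr
  linarith

lemma qNum_split {Q : ℝ} (hQ0 : 0 < Q) (hQ1 : Q < 1) {d : ℕ} (hd : 0 < d) (y : ℝ) :
    qNum Q ((d : ℝ) * y) = qNum Q (d : ℝ) * qNum (Q ^ d) y := by
  have hQne : Q - 1 ≠ 0 := by linarith
  have hQd1 : Q ^ d < 1 := pow_lt_one₀ hQ0.le hQ1 hd.ne'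
  have hQdne : Q ^ d - 1 ≠ 0 := by linarith
  unfold qNum
  have h1 : (Q ^ d : ℝ) ^ y = Q ^ ((d : ℝ) * y) := by
    rw [← Real.rpow_natCast Q d, ← Real.rpow_mul hQ0.le]
  have h2 : Q ^ (d : ℝ) = Q ^ d := Real.rpow_natCast Q d
  rw [h1, h2]
  field_simp

lemma cpow_norm_bound {Q : ℝ} (hQ0 : 0 < Q) (hQ1 : Q < 1) {x : ℝ} (hx : 0 < x) (s : ℂ) :
    ∃ C : ℝ, ∀ m : ℕ, ‖((qNum Q (x + (m : ℝ)) : ℝ) : ℂ) ^ (-s)‖ ≤ C := by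
  refine ⟨max ((qNum Q x) ^ (-s.re)) ((1 / (1 - Q)) ^ (-s.re)), fun m => ?_⟩
  have h1 : 0 < qNum Q (x + (m : ℝ)) := qNum_pos hQ0 hQ1 (by
    have : (0:ℝ) ≤ (m:ℝ) := Nat.cast_nonneg m
    linarith)
  rw [Complex.norm_cpow_eq_rpow_re_of_pos h1, Complex.neg_re]
  have hlow : qNum Q x ≤ qNum Q (x + (m : ℝ)) := qNum_mono hQ0 hQ1 (le_add_of_nonneg_right (Nat.cast_nonneg m))
  have hhigh : qNum Q (x + (m : ℝ)) ≤ 1 / (1 - Q) := qNum_le hQ0 hQ1 _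
  rcases le_total 0 (-s.re) with h | h
  · exact le_max_of_le_right (Real.rpow_le_rpow h1.le hhigh h)
  · exact le_max_of_le_left (Real.rpow_le_rpow_of_nonpos (qNum_pos hQ0 hQ1 hx) hlow h)

theorem statement13 (q : ℝ) (hq0 : 0 < q) (hq1 : q < 1) (α : ℕ) (hα : 1 ≤ α)
    (d : ℕ) (hd0 : 0 < d) (hdo : Odd d) (χ : DirichletCharacter ℂ d)
    (x : ℝ) (hx : 0 < x) (s : ℂ) :
    qLfun q d χ α s x =
      ((qNum q 2 : ℝ) : ℂ) /
          (((qNum (q ^ d) 2 : ℝ) : ℂ) * ((qNum (q ^ α) d : ℝ) : ℂ) ^ s) *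
        ∑ l ∈ Finset.range d,
          (-1 : ℂ) ^ l * χ (l : ZMod d) * (q : ℂ) ^ l *
            qHurwitzZeta (q ^ d) α s ((x + l) / d) := by
  have hα0 : α ≠ 0 := by omega
  haveI : NeZero d := ⟨hd0.ne'⟩
  have hQ0 : 0 < q ^ α := pow_pos hq0 α
  have hQ1 : q ^ α < 1 := pow_lt_one₀ hq0.le hq1 hα0
  have hR0 : 0 < q ^ d := pow_pos hq0 d
  have hR1 : q ^ d < 1 := pow_lt_one₀ hq0.le hq1 hd0.ne'
  have hbase : ((q ^ d) ^ α : ℝ) = (q ^ α) ^ d := by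
    rw [← pow_mul, ← pow_mul, mul_comm]
  have hQd0 : 0 < (q ^ α) ^ d := pow_pos hQ0 d
  have hQd1 : (q ^ α) ^ d < 1 := pow_lt_one₀ hQ0.le hQ1 hd0.ne'
  have hDpos : 0 < qNum (q ^ α) (d : ℝ) :=
    qNum_pos hQ0 hQ1 (by exact_mod_cast hd0)
  have hc2pos : 0 < qNum (q ^ d) 2 := qNum_pos hR0 hR1 (by norm_num)
  set f : ℕ → ℂ := fun m =>
    (q : ℂ) ^ m * χ (m : ZMod d) * (-1 : ℂ) ^ m *
      ((qNum (q ^ α) (x + (m : ℝ)) : ℝ) : ℂ) ^ (-s) with hf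
  set A : ℕ → ℕ → ℂ := fun l n =>
    (-1 : ℂ) ^ n * ((q ^ d : ℝ) : ℂ) ^ n *
      ((qNum ((q ^ d) ^ α) ((n : ℝ) + (x + (l : ℝ)) / (d : ℝ)) : ℝ) : ℂ) ^ (-s) with hA
  -- summability of f
  have hsum : Summable f := by
    obtain ⟨C, hC⟩ := cpow_norm_bound hQ0 hQ1 hx s
    apply Summable.of_norm_bounded (g := fun m => C * q ^ m)
      ((summable_geometric_of_lt_one hq0.le hq1).mul_left C)
    intro m
    have hCnn : 0 ≤ C := le_trans (norm_nonneg _) (hC 0)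
    have h1 : ‖(q : ℂ) ^ m * χ (m : ZMod d) * (-1 : ℂ) ^ m‖ ≤ q ^ m := by
      rw [norm_mul, norm_mul, norm_pow, norm_pow]
      have : ‖(q : ℂ)‖ = q := by
        rw [Complex.norm_real, Real.norm_eq_abs, abs_of_pos hq0]
      rw [this]
      have h2 : ‖χ ((m : ℕ) : ZMod d)‖ ≤ 1 := χ.norm_le_one _
      have h3 : (0:ℝ) ≤ q ^ m := by positivity
      simp only [norm_neg, norm_one, one_pow, mul_one]
      nlinarith [norm_nonneg (χ ((m : ℕ) : ZMod d))]
    calc ‖f m‖ = ‖(q : ℂ) ^ m * χ (m : ZMod d) * (-1 : ℂ) ^ m‖ *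
          ‖((qNum (q ^ α) (x + (m : ℝ)) : ℝ) : ℂ) ^ (-s)‖ := by rw [hf]; simp [norm_mul]
      _ ≤ q ^ m * C := by
          apply mul_le_mul h1 (hC m) (norm_nonneg _) (by positivity)
      _ = C * q ^ m := by ring
  -- termwise identity
  have hterm : ∀ l n : ℕ, l < d →
      f (n * d + l) =
        χ ((l : ℕ) : ZMod d) * ((-1 : ℂ) ^ l * (q : ℂ) ^ l *
          ((qNum (q ^ α) (d : ℝ) : ℝ) : ℂ) ^ (-s)) * A l n := by
    intro l n hl
    have hχ : (((n * d + l : ℕ)) : ZMod d) = ((l : ℕ) : ZMod d) := by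
      push_cast
      simp [ZMod.natCast_self]
    have harg : qNum (q ^ α) (x + ((n * d + l : ℕ) : ℝ)) =
        qNum (q ^ α) (d : ℝ) * qNum ((q ^ α) ^ d) ((n : ℝ) + (x + (l : ℝ)) / (d : ℝ)) := by
      rw [← qNum_split hQ0 hQ1 hd0]
      congr 1
      have hdne : (d : ℝ) ≠ 0 := Nat.cast_ne_zero.mpr hd0.ne'
      push_cast
      field_simp
      ring
    have hApos : 0 < qNum ((q ^ α) ^ d) ((n : ℝ) + (x + (l : ℝ)) / (d : ℝ)) := by
      apply qNum_pos hQd0 hQd1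
      have hdpos : (0:ℝ) < (d : ℝ) := Nat.cast_pos.mpr hd0
      have : 0 < (x + (l : ℝ)) / (d : ℝ) := by positivity
      positivity
    rw [hf, hA]
    simp only
    rw [hχ, harg, Complex.ofReal_mul,
      Complex.mul_cpow_ofReal_nonneg hDpos.le hApos.le]
    have hq' : (q : ℂ) ^ (n * d + l) = ((q ^ d : ℝ) : ℂ) ^ n * (q : ℂ) ^ l := by
      push_cast
      rw [pow_add, pow_mul]
      ring
    have hneg : (-1 : ℂ) ^ (n * d + l) = (-1 : ℂ) ^ n * (-1 : ℂ) ^ l := by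
      rw [pow_add, mul_comm n d, pow_mul, hdo.neg_one_pow]
    rw [hq', hneg, hbase]
    ring
  -- reindexing
  have hmain : (∑' m, f m) = ∑ l ∈ Finset.range d, ∑' n : ℕ, f (n * d + l) := by
    have hinj : ∀ l : ℕ, Function.Injective (fun n : ℕ => n * d + l) := by
      intro l a b hab
      simp only at hab
      exact Nat.eq_of_mul_eq_mul_right hd0 (Nat.add_right_cancel hab)
    have hsl : ∀ l : ℕ, Summable fun n : ℕ => f (n * d + l) :=
      fun l => by exact hsum.comp_injective (hinj l)
    have h1 : (∑' m, f m) = ∑' p : ℕ × Fin d, f (p.1 * d + (p.2 : ℕ)) :=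
      ((Nat.divModEquiv d).symm.tsum_eq f).symm
    have hsum2 : Summable fun p : ℕ × Fin d => f (p.1 * d + (p.2 : ℕ)) := by
      exact ((Nat.divModEquiv d).symm.summable_iff (f := f)).mpr hsum
    have h3 : (∑' p : ℕ × Fin d, f (p.1 * d + (p.2 : ℕ))) =
        ∑' (n : ℕ) (l : Fin d), f (n * d + (l : ℕ)) :=
      Summable.tsum_prod' hsum2 (fun n => (hasSum_fintype _).summable)
    have h2 : ∀ n : ℕ, (∑' l : Fin d, f (n * d + (l : ℕ))) =
        ∑ l : Fin d, f (n * d + (l : ℕ)) := fun n => tsum_fintype _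
    have h4 : (∑' n : ℕ, ∑ l : Fin d, f (n * d + (l : ℕ))) =
        ∑ l : Fin d, ∑' n : ℕ, f (n * d + (l : ℕ)) :=
      Summable.tsum_finsetSum (fun l _ => hsl l)
    rw [h1, h3]
    simp_rw [h2]
    rw [h4, ← Fin.sum_univ_eq_sum_range (fun l => ∑' n : ℕ, f (n * d + l)) d]
  -- put everything together
  have hLHS : qLfun q d χ α s x = ((qNum q 2 : ℝ) : ℂ) * ∑' m, f m := rfl
  have hH : ∀ l : ℕ, qHurwitzZeta (q ^ d) α s ((x + (l : ℝ)) / (d : ℝ)) =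
      ((qNum (q ^ d) 2 : ℝ) : ℂ) * ∑' n, A l n := fun l => rfl
  rw [hLHS, hmain, Finset.mul_sum, Finset.mul_sum]
  apply Finset.sum_congr rfl
  intro l hl
  have hld : l < d := Finset.mem_range.mp hl
  have hinner : (∑' n : ℕ, f (n * d + l)) =
      χ ((l : ℕ) : ZMod d) * ((-1 : ℂ) ^ l * (q : ℂ) ^ l *
        ((qNum (q ^ α) (d : ℝ) : ℝ) : ℂ) ^ (-s)) * ∑' n, A l n := by
    rw [← tsum_mul_left]
    exact tsum_congr fun n => hterm l n hld
  rw [hinner, hH l, Complex.cpow_neg]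
  have hc2ne : ((qNum (q ^ d) 2 : ℝ) : ℂ) ≠ 0 := by
    exact_mod_cast hc2pos.ne'
  have hDne : ((qNum (q ^ α) (d : ℝ) : ℝ) : ℂ) ^ s ≠ 0 := by
    rw [Ne, Complex.cpow_eq_zero_iff]
    push_neg
    intro h
    exact absurd h (by exact_mod_cast hDpos.ne')
  field_simp
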